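/- The graceful chromatic number of the complete graph K_13 is 32; a graceful 32-coloring is given by assigning the thirteen vertices the colors 1, 2, 4, 8, 9, 11, 19, 22, 23, 26, 28, 31, 32. -/

import Mathlib

/-- The induced edge coloring `g*(ab) = |g a - g b|` is proper: any two edges sharing a
vertex receive distinct values. -/
def GracefulEdgeProper {V : Type*} (G : SimpleGraph V) (g : V → ℕ) : Prop :=
  ∀ a b c : V, G.Adj a b → G.Adj a c → b ≠ c →
    Nat.dist (g a) (g b) ≠ Nat.dist (g a) (g c)

/-- A graceful coloring: a proper vertex coloring by positive integers whose induced
edge coloring is proper. -/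
def IsGracefulColoring {V : Type*} (G : SimpleGraph V) (g : V → ℕ) : Prop :=
  (∀ v, 1 ≤ g v) ∧ (∀ a b : V, G.Adj a b → g a ≠ g b) ∧ GracefulEdgeProper G g

/-- A graceful `l`-coloring: a proper vertex coloring with colors in `{1, …, l}` whose
induced edge coloring is proper. -/
def IsGracefulLColoring {V : Type*} (G : SimpleGraph V) (l : ℕ) (g : V → ℕ) : Prop :=
  (∀ v, g v ∈ Finset.Icc 1 l) ∧ (∀ a b : V, G.Adj a b → g a ≠ g b) ∧ GracefulEdgeProper G g

/-- The graceful chromatic number: the least `l ≥ 2` admitting a graceful `l`-coloring. -/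
noncomputable def gracefulChromaticNumber {V : Type*} (G : SimpleGraph V) : ℕ :=
  sInf {l | 2 ≤ l ∧ ∃ g : V → ℕ, IsGracefulLColoring G l g}

/-- A finite set of naturals is 3-AP-free: no three distinct elements `a, b, c`
with `b - a = c - b`. -/
def ThreeAPFreeSet (S : Finset ℕ) : Prop :=
  ∀ a ∈ S, ∀ b ∈ S, ∀ c ∈ S, a ≠ b → b ≠ c → a ≠ c → (b : ℤ) - (a : ℤ) ≠ (c : ℤ) - (b : ℤ)

/-! ### A verified search showing there is no 13-element 3-AP-free subset of `{1, …, 31}` -/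

/-- Midpoint-freeness property used throughout. -/
def APQ (S : Finset ℕ) : Prop :=
  ∀ a ∈ S, ∀ b ∈ S, ∀ c ∈ S, a ≠ b → a ≠ c → b ≠ c → b + c ≠ 2 * a

/-- Bits forbidden for future elements, generated by pairs `(a, c)` with `a ∈ s`. -/
def newbits (s : List ℕ) (c : ℕ) : ℕ := s.foldr (fun a m => m ||| 1 <<< (2 * c - a)) 0

/-- DFS: can we extend the chosen set `s` (with forbidden bitmask `bad`) by `k` further
elements taken among `{c, c+1, …, c+f-1}` keeping midpoint-freeness?  (Only completeness
of this test is proved; it may in principle return `true` spuriously.) -/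
def apSearch : List ℕ → ℕ → ℕ → ℕ → ℕ → Bool
  | _, _, 0, _, _ => true
  | _, _, _+1, _, 0 => false
  | s, bad, k+1, c, f+1 =>
      ((!bad.testBit c) && decide (k ≤ f) && apSearch (c :: s) (bad ||| newbits s c) k (c+1) f)
      || (decide (k + 1 ≤ f) && apSearch s bad (k+1) (c+1) f)

lemma newbits_spec {s : List ℕ} {c i : ℕ} (h : (newbits s c).testBit i = true) :
    ∃ a ∈ s, i = 2 * c - a := by
  induction s with
  | nil => simp [newbits, Nat.zero_testBit] at h
  | cons a t ih =>
      have : newbits (a :: t) c = newbits t c ||| 1 <<< (2 * c - a) := rfl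
      rw [this, Nat.testBit_or] at h
      rcases Bool.or_eq_true_iff.mp h with h | h
      · obtain ⟨x, hx, hx'⟩ := ih h
        exact ⟨x, List.mem_cons_of_mem _ hx, hx'⟩
      · rw [Nat.shiftLeft_eq, one_mul, Nat.testBit_two_pow] at h
        exact ⟨a, List.mem_cons_self, (of_decide_eq_true h).symm⟩

lemma length_le_of_sorted_bounds {t : List ℕ} {lo n : ℕ} (hs : t.Pairwise (· < ·))
    (hb : ∀ x ∈ t, lo ≤ x ∧ x < lo + n) : t.length ≤ n := by
  have hnd : t.Nodup := hs.imp ne_of_lt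
  have hsub : t ⊆ List.range' lo n := fun x hx => List.mem_range'_1.mpr (hb x hx)
  simpa using (hnd.subperm hsub).length_le

lemma apSearch_complete {S : Finset ℕ} (hQ : APQ S) :
    ∀ (f : ℕ) (t s : List ℕ) (bad k c : ℕ),
      t.Pairwise (· < ·) → (∀ x ∈ t, x ∈ S) → (∀ x ∈ s, x ∈ S) →
      (s ++ t).Nodup → (∀ x ∈ t, c ≤ x ∧ x < c + f) → (∀ a ∈ s, a < c) →
      (∀ i, bad.testBit i = true → ∃ a ∈ s, ∃ b ∈ s, a ≠ b ∧ i + a = 2 * b) →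
      t.length = k → apSearch s bad k c f = true := by
  intro f
  induction f with
  | zero =>
      intro t s bad k c ht hts hss hnd hbound hlt hbad hlen
      match k, t, hlen with
      | 0, _, _ => rfl
      | k+1, x :: t', hlen =>
          exact absurd (hbound x (List.mem_cons_self)) (by omega)
  | succ f ih =>
      intro t s bad k c ht hts hss hnd hbound hlt hbad hlen
      match k, t, hlen with
      | 0, _, _ => rfl
      | k+1, x :: t', hlen =>
        have hlen' : t'.length = k := by simpa using hlen
        have hxS : x ∈ S := hts x (List.mem_cons_self)
        have hxnots : x ∉ s := by
          have := List.disjoint_of_nodup_append hnd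
          exact fun hxs => this hxs (List.mem_cons_self)
        rw [apSearch, Bool.or_eq_true, Bool.and_eq_true, Bool.and_eq_true]
        by_cases hxc : x = c
        · subst hxc
          left
          have ht' : t'.Pairwise (· < ·) := ht.of_cons
          have hrel : ∀ y ∈ t', x < y := (List.pairwise_cons.mp ht).1
          have hb' : ∀ y ∈ t', x + 1 ≤ y ∧ y < x + 1 + f := by
            intro y hy
            have := (hbound y (List.mem_cons_of_mem _ hy)).2
            exact ⟨hrel y hy, by omega⟩
          refine ⟨⟨?_, ?_⟩, ?_⟩
          · -- x is not a forbidden bit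
            rw [Bool.not_eq_true']
            by_contra hbit
            rw [Bool.not_eq_false] at hbit
            obtain ⟨a, ha, b, hb, hab, heq⟩ := hbad x hbit
            have haS := hss a ha
            have hbS := hss b hb
            have hxa : x ≠ a := fun h => hxnots (h ▸ ha)
            have hxb : x ≠ b := fun h => hxnots (h ▸ hb)
            exact hQ b hbS x hxS a haS (Ne.symm hxb) hab.symm hxa heq
          · -- k ≤ f
            have : t'.length ≤ f := length_le_of_sorted_bounds ht' hb'
            exact decide_eq_true (by omega : k ≤ f)
          · -- recursive call
            refine ih t' (x :: s) _ k (x + 1) ht'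
              (fun y hy => hts y (List.mem_cons_of_mem _ hy))
              (fun y hy => (List.mem_cons.mp hy).elim (fun h => h ▸ hxS) (hss y))
              ?_ hb' ?_ ?_ (by simpa using hlen)
            · exact (List.perm_middle.nodup_iff).mp hnd
            · intro a ha
              rcases List.mem_cons.mp ha with h | h
              · omega
              · exact Nat.lt_succ_of_lt (hlt a h)
            · intro i hbit
              rw [Nat.testBit_or] at hbit
              rcases Bool.or_eq_true_iff.mp hbit with h | h
              · obtain ⟨a, ha, b, hb, hab, heq⟩ := hbad i h
                exact ⟨a, List.mem_cons_of_mem _ ha, b, List.mem_cons_of_mem _ hb, hab, heq⟩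
              · obtain ⟨a, ha, rfl⟩ := newbits_spec h
                have halt : a < x := hlt a ha
                exact ⟨a, List.mem_cons_of_mem _ ha, x, List.mem_cons_self,
                  Nat.ne_of_lt halt, by omega⟩
        · -- skip c
          right
          have hcx : c < x := lt_of_le_of_ne (hbound x (List.mem_cons_self)).1
            (fun h => hxc h.symm)
          have hb' : ∀ y ∈ x :: t', c + 1 ≤ y ∧ y < c + 1 + f := by
            intro y hy
            have h1 := hbound y hy
            rcases List.mem_cons.mp hy with h | h
            · subst h; exact ⟨hcx, by omega⟩
            · have := (List.pairwise_cons.mp ht).1 y h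
              exact ⟨by omega, by omega⟩
          rw [Bool.and_eq_true]
          refine ⟨?_, ih (x :: t') s bad (k+1) (c+1) ht hts hss hnd hb' ?_ hbad hlen⟩
          · have : (x :: t').length ≤ f := length_le_of_sorted_bounds ht hb'
            rw [hlen] at this
            exact decide_eq_true this
          · intro a ha; exact Nat.lt_succ_of_lt (hlt a ha)

set_option maxHeartbeats 40000000 in
set_option maxRecDepth 100000 in
lemma apSearch_run : apSearch [1] 0 12 2 30 = false := by decide

/-- There is no 13-element midpoint-free subset of `{1, …, 31}`. -/
lemma no_big_apfree (S : Finset ℕ) (hcard : S.card = 13)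
    (hsub : ∀ x ∈ S, 1 ≤ x ∧ x ≤ 31) (hQ : APQ S) : False := by
  -- translate so that the minimum becomes 1
  have hne : S.Nonempty := Finset.card_pos.mp (by omega)
  set m := S.min' hne with hm
  have hmS : m ∈ S := S.min'_mem hne
  have hm1 : 1 ≤ m := (hsub m hmS).1
  have hmin : ∀ x ∈ S, m ≤ x := fun x hx => S.min'_le x hx
  set T : Finset ℕ := S.image (fun x => x - m + 1) with hT
  have hinj : Set.InjOn (fun x => x - m + 1) S := by
    intro a ha b hb hab
    have := hmin a ha; have := hmin b hb
    simp only at hab; omega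
  have hTcard : T.card = 13 := by rw [hT, Finset.card_image_of_injOn hinj, hcard]
  have hTsub : ∀ x ∈ T, 1 ≤ x ∧ x ≤ 31 := by
    intro x hx
    obtain ⟨a, ha, rfl⟩ := Finset.mem_image.mp hx
    have := hmin a ha; have := (hsub a ha).2
    omega
  have hT1 : (1 : ℕ) ∈ T := by
    refine Finset.mem_image.mpr ⟨m, hmS, by omega⟩
  have hTQ : APQ T := by
    intro a' ha' b' hb' c' hc' hab hac hbc heq
    obtain ⟨a, ha, rfl⟩ := Finset.mem_image.mp ha'
    obtain ⟨b, hb, rfl⟩ := Finset.mem_image.mp hb'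
    obtain ⟨c, hc, rfl⟩ := Finset.mem_image.mp hc'
    have h1 := hmin a ha; have h2 := hmin b hb; have h3 := hmin c hc
    have hab' : a ≠ b := fun h => hab (by rw [h])
    have hac' : a ≠ c := fun h => hac (by rw [h])
    have hbc' : b ≠ c := fun h => hbc (by rw [h])
    exact hQ a ha b hb c hc hab' hac' hbc' (by omega)
  -- the sorted list of `T \ {1}` is a witness accepted by the search
  set t : List ℕ := (T.erase 1).sort (· ≤ ·) with htdef
  have hts : t.Pairwise (· < ·) := (Finset.sortedLT_sort _).pairwise
  have htm : ∀ x ∈ t, x ∈ T.erase 1 := fun x hx => (Finset.mem_sort _).mp hx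
  have htlen : t.length = 12 := by
    rw [htdef, Finset.length_sort, Finset.card_erase_of_mem hT1, hTcard]
  have hrun : apSearch [1] 0 12 2 30 = true := by
    refine apSearch_complete hTQ 30 t [1] 0 12 2 hts
      (fun x hx => Finset.mem_of_mem_erase (htm x hx))
      (fun x hx => by simpa using (List.mem_singleton.mp hx) ▸ hT1)
      ?_ ?_ ?_ ?_ htlen
    · -- nodup of [1] ++ t
      have h1n : (1 : ℕ) ∉ t := fun h => (Finset.notMem_erase 1 T) (htm 1 h)
      have hnd : t.Nodup := Finset.sort_nodup _ _
      simp only [List.singleton_append, List.nodup_cons]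
      exact ⟨h1n, hnd⟩
    · intro x hx
      have h := htm x hx
      have hx1 : x ≠ 1 := Finset.ne_of_mem_erase h
      have := hTsub x (Finset.mem_of_mem_erase h)
      omega
    · intro a ha
      have : a = 1 := List.mem_singleton.mp ha
      omega
    · intro i hbit
      rw [Nat.zero_testBit] at hbit
      exact absurd hbit (by simp)
  rw [apSearch_run] at hrun
  exact absurd hrun (by simp)

/-! ### Main theorem -/

lemma key_no31 : ¬ ∃ g : Fin 13 → ℕ, (∀ v, g v ∈ Finset.Icc 1 31) ∧ Function.Injective g ∧
    (∀ a b c : Fin 13, a ≠ b → a ≠ c → b ≠ c → g b + g c ≠ 2 * g a) := by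
  rintro ⟨g, h1, h2, h3⟩
  set S : Finset ℕ := Finset.univ.image g with hS
  have hcard : S.card = 13 := by
    rw [hS, Finset.card_image_of_injective _ h2, Finset.card_univ, Fintype.card_fin]
  have hsub : ∀ x ∈ S, 1 ≤ x ∧ x ≤ 31 := by
    intro x hx
    obtain ⟨v, _, rfl⟩ := Finset.mem_image.mp hx
    exact Finset.mem_Icc.mp (h1 v)
  have hQ : APQ S := by
    intro a ha b hb c hc hab hac hbc
    obtain ⟨u, _, rfl⟩ := Finset.mem_image.mp ha
    obtain ⟨v, _, rfl⟩ := Finset.mem_image.mp hb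
    obtain ⟨w, _, rfl⟩ := Finset.mem_image.mp hc
    exact h3 u v w (fun h => hab (by rw [h])) (fun h => hac (by rw [h]))
      (fun h => hbc (by rw [h]))
  exact no_big_apfree S hcard hsub hQ

set_option maxRecDepth 10000 in
theorem gracefulChromatic_K13 :
    gracefulChromaticNumber (⊤ : SimpleGraph (Fin 13)) = 32 ∧
      IsGracefulLColoring (⊤ : SimpleGraph (Fin 13)) 32 ![1, 2, 4, 8, 9, 11, 19, 22, 23, 26, 28, 31, 32] := by
  have hcol : IsGracefulLColoring (⊤ : SimpleGraph (Fin 13)) 32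
      ![1, 2, 4, 8, 9, 11, 19, 22, 23, 26, 28, 31, 32] := by
    refine ⟨by decide, ?_, ?_⟩
    · intro a b hab
      rw [SimpleGraph.top_adj] at hab
      revert hab; revert a b; decide
    · intro a b c hab hac hbc
      rw [SimpleGraph.top_adj] at hab hac
      revert hab hac hbc; revert a b c; decide
  refine ⟨?_, hcol⟩
  have hmem : 32 ∈ {l | 2 ≤ l ∧ ∃ g : Fin 13 → ℕ, IsGracefulLColoring (⊤ : SimpleGraph (Fin 13)) l g} :=
    ⟨by norm_num, _, hcol⟩
  refine le_antisymm (Nat.sInf_le hmem) (le_csInf ⟨32, hmem⟩ ?_)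
  rintro l ⟨hl2, g, hg1, hg2, hg3⟩
  by_contra hlt
  push_neg at hlt
  have hl31 : l ≤ 31 := by omega
  apply key_no31
  refine ⟨g, ?_, ?_, ?_⟩
  · intro v
    have := Finset.mem_Icc.mp (hg1 v)
    exact Finset.mem_Icc.mpr ⟨this.1, le_trans this.2 hl31⟩
  · intro a b hab
    by_contra hne
    exact hg2 a b ((SimpleGraph.top_adj a b).mpr hne) hab
  · intro a b c hab hac hbc heq
    apply hg3 a b c ((SimpleGraph.top_adj a b).mpr hab) ((SimpleGraph.top_adj a c).mpr hac) hbc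
    simp only [Nat.dist]
    omega
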